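/- Let n > 2 and let G = K_{1,n-1} be the star on n vertices. If m·K_n is partitioned into copies of G, then m is even. Moreover, 2·K_n can be partitioned into n copies of K_{1,n-1} (one star centered at each vertex). Hence M(K_{1,n-1}) = 2ℕ. -/

import Mathlib

/-- The edge multiset of the multigraph `m·K_V` can be partitioned into copies
of `G`. -/
def CanPartitionMultiKn {V : Type*} (G : SimpleGraph V) (m : ℕ) : Prop :=
  ∃ (l : ℕ) (H : Fin l → SimpleGraph V),
    (∀ i, Nonempty (H i ≃g G)) ∧
    ∀ u v : V, u ≠ v → Nat.card {i : Fin l // (H i).Adj u v} = m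

variable {V : Type*} [DecidableEq V]

/-- star graph centered at `c`. -/
def starG (c : V) : SimpleGraph V where
  Adj u v := (u = c ∧ v ≠ c) ∨ (u ≠ c ∧ v = c)
  symm := by constructor; intro u v h; tauto
  loopless := by constructor; intro v h; tauto

lemma starG_adj (c u v : V) :
    (starG c).Adj u v ↔ (u = c ∧ v ≠ c) ∨ (u ≠ c ∧ v = c) := Iff.rfl

/-- isomorphism between stars via swap -/
def starIso (c c' : V) : starG c ≃g starG c' where
  toEquiv := Equiv.swap c c'
  map_rel_iff' := by
    intro u v
    have h1 : ∀ x : V, Equiv.swap c c' x = c' ↔ x = c := by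
      intro x
      rw [Equiv.apply_eq_iff_eq_symm_apply]
      simp
    simp only [starG_adj, Equiv.coe_fn_mk, ne_eq, h1]

lemma cbg_eq_starG (n : ℕ) :
    completeBipartiteGraph (Fin 1) (Fin n) = starG (Sum.inl 0) := by
  ext a b
  rcases a with a | a <;> rcases b with b | b <;>
    simp [completeBipartiteGraph, starG, Sum.inl.injEq, Fin.eq_zero]

lemma star_char {G : SimpleGraph V} {c : V} (e : G ≃g starG c) :
    G = starG (e.symm c) := by
  ext u v
  have h : ∀ x : V, e x = c ↔ x = e.symm c := by
    intro x
    exact Equiv.apply_eq_iff_eq_symm_apply e.toEquiv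
  rw [← e.map_rel_iff]
  simp only [starG_adj, ne_eq, h]

lemma canPartition_zero {V : Type*} (G : SimpleGraph V) : CanPartitionMultiKn G 0 := by
  refine ⟨0, fun i => i.elim0, fun i => i.elim0, fun u v _ => ?_⟩
  have : IsEmpty {i : Fin 0 // (Fin.elim0 i : SimpleGraph V).Adj u v} :=
    ⟨fun x => x.1.elim0⟩
  exact Nat.card_of_isEmpty

lemma canPartition_add {V : Type*} {G : SimpleGraph V} {a b : ℕ}
    (ha : CanPartitionMultiKn G a) (hb : CanPartitionMultiKn G b) :
    CanPartitionMultiKn G (a + b) := by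
  obtain ⟨l1, H1, hi1, hc1⟩ := ha
  obtain ⟨l2, H2, hi2, hc2⟩ := hb
  refine ⟨l1 + l2, fun i => Sum.elim H1 H2 (finSumFinEquiv.symm i),
    fun i => ?_, fun u v huv => ?_⟩
  · beta_reduce
    rcases hj : finSumFinEquiv.symm i with j | j
    · exact hi1 j
    · exact hi2 j
  · beta_reduce
    calc Nat.card {i : Fin (l1 + l2) // (Sum.elim H1 H2 (finSumFinEquiv.symm i)).Adj u v}
        = Nat.card {j : Fin l1 ⊕ Fin l2 // (Sum.elim H1 H2 j).Adj u v} :=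
          Nat.card_congr (Equiv.subtypeEquiv finSumFinEquiv.symm fun _ => Iff.rfl)
      _ = Nat.card {j : Fin l1 // (H1 j).Adj u v} + Nat.card {j : Fin l2 // (H2 j).Adj u v} :=
          (Nat.card_congr Equiv.subtypeSum).trans Nat.card_sum
      _ = a + b := by rw [hc1 u v huv, hc2 u v huv]

lemma canPartition_two_mul {V : Type*} {G : SimpleGraph V}
    (h2 : CanPartitionMultiKn G 2) (k : ℕ) : CanPartitionMultiKn G (2 * k) := by
  induction k with
  | zero => exact canPartition_zero G
  | succ k ih =>
      have := canPartition_add ih h2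
      rwa [show 2 * k + 2 = 2 * (k + 1) by ring] at this

lemma canPartition_two (n : ℕ) (hn : 2 < n) :
    CanPartitionMultiKn (completeBipartiteGraph (Fin 1) (Fin (n - 1))) 2 := by
  have hcard : Fintype.card (Fin 1 ⊕ Fin (n - 1)) = n := by
    simp only [Fintype.card_sum, Fintype.card_fin]; omega
  let φ : Fin n ≃ (Fin 1 ⊕ Fin (n - 1)) := (Fintype.equivFinOfCardEq hcard).symm
  refine ⟨n, fun i => starG (φ i), fun i => ?_, fun u v huv => ?_⟩
  · rw [cbg_eq_starG]; exact ⟨starIso _ _⟩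
  · calc Nat.card {i : Fin n // (starG (φ i)).Adj u v}
        = Nat.card {w : Fin 1 ⊕ Fin (n - 1) // (starG w).Adj u v} :=
          Nat.card_congr (Equiv.subtypeEquiv φ fun _ => Iff.rfl)
      _ = Nat.card ({u, v} : Set (Fin 1 ⊕ Fin (n - 1))) := by
          refine Nat.card_congr (Equiv.subtypeEquivRight fun w => ?_)
          simp only [starG_adj, Set.mem_insert_iff, Set.mem_singleton_iff]
          constructor
          · rintro (⟨rfl, -⟩ | ⟨-, rfl⟩)
            · left; rfl
            · right; rfl
          · rintro (rfl | rfl)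
            · exact Or.inl ⟨rfl, fun h => huv h.symm⟩
            · exact Or.inr ⟨fun h => huv h, rfl⟩
      _ = 2 := by rw [Nat.card_coe_set_eq, Set.ncard_pair huv]

lemma even_of_partition (n : ℕ) (hn : 2 < n) (m : ℕ)
    (h : CanPartitionMultiKn (completeBipartiteGraph (Fin 1) (Fin (n - 1))) m) :
    Even m := by
  classical
  obtain ⟨l, H, hiso, hcnt⟩ := h
  have hcard : Fintype.card (Fin 1 ⊕ Fin (n - 1)) = n := by
    simp only [Fintype.card_sum, Fintype.card_fin]; omega
  have hc : ∀ i, ∃ c, H i = starG c := by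
    intro i
    obtain ⟨e⟩ := hiso i
    rw [cbg_eq_starG] at e
    exact ⟨_, star_char e⟩
  choose c hcf using hc
  set t : (Fin 1 ⊕ Fin (n - 1)) → ℕ :=
    fun v => (Finset.univ.filter (fun i : Fin l => c i = v)).card with ht
  have key : ∀ v, (n - 1) * m = l + (n - 2) * t v := by
    intro v
    have h1 : ∑ u ∈ Finset.univ.erase v, Nat.card {i : Fin l // (H i).Adj u v}
        = (n - 1) * m := by
      rw [Finset.sum_congr rfl (fun u hu => hcnt u v (Finset.ne_of_mem_erase hu)),
        Finset.sum_const, Finset.card_erase_of_mem (Finset.mem_univ v),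
        Finset.card_univ, hcard, smul_eq_mul]
    have h2 : ∀ u, Nat.card {i : Fin l // (H i).Adj u v}
        = (Finset.univ.filter (fun i => (H i).Adj u v)).card := by
      intro u; rw [Nat.card_eq_fintype_card, Fintype.card_subtype]
    have h3 : ∑ u ∈ Finset.univ.erase v,
          (Finset.univ.filter (fun i : Fin l => (H i).Adj u v)).card
        = ∑ i : Fin l, ((Finset.univ.erase v).filter (fun u => (H i).Adj u v)).card := by
      simp only [Finset.card_filter]
      exact Finset.sum_comm
    have h4 : ∀ i : Fin l, ((Finset.univ.erase v).filter (fun u => (H i).Adj u v)).card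
        = 1 + (if c i = v then n - 2 else 0) := by
      intro i
      by_cases hci : c i = v
      · have he : (Finset.univ.erase v).filter (fun u => (H i).Adj u v)
            = Finset.univ.erase v := by
          ext u
          simp only [Finset.mem_filter, Finset.mem_erase, Finset.mem_univ, and_true,
            hcf i, starG_adj, hci, and_iff_left_iff_imp, true_and]
          tauto
        rw [he, if_pos hci, Finset.card_erase_of_mem (Finset.mem_univ v),
          Finset.card_univ, hcard]
        omega
      · have he : (Finset.univ.erase v).filter (fun u => (H i).Adj u v) = {c i} := by
          ext u
          simp only [Finset.mem_filter, Finset.mem_erase, Finset.mem_univ, and_true,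
            hcf i, starG_adj, Finset.mem_singleton, true_and]
          constructor
          · rintro ⟨hu, ⟨rfl, -⟩ | ⟨-, h⟩⟩
            · rfl
            · exact absurd h.symm hci
          · rintro rfl
            exact ⟨hci, Or.inl ⟨rfl, fun h => hci h.symm⟩⟩
        rw [he, if_neg hci, Finset.card_singleton]
    have h5 : ∑ i : Fin l, (1 + (if c i = v then n - 2 else 0))
        = l + (n - 2) * t v := by
      simp only [ht]
      rw [Finset.sum_add_distrib, Finset.sum_const, Finset.card_univ, Fintype.card_fin,
        smul_eq_mul, ← Finset.sum_filter, Finset.sum_const, smul_eq_mul]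
      ring
    calc (n - 1) * m = ∑ u ∈ Finset.univ.erase v, Nat.card {i : Fin l // (H i).Adj u v} :=
          h1.symm
      _ = ∑ u ∈ Finset.univ.erase v,
            (Finset.univ.filter (fun i : Fin l => (H i).Adj u v)).card :=
          Finset.sum_congr rfl fun u _ => h2 u
      _ = ∑ i : Fin l, ((Finset.univ.erase v).filter (fun u => (H i).Adj u v)).card := h3
      _ = ∑ i : Fin l, (1 + (if c i = v then n - 2 else 0)) :=
          Finset.sum_congr rfl fun i _ => h4 i
      _ = l + (n - 2) * t v := h5
  have hconst : ∀ v w, t v = t w := by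
    intro v w
    have hv := key v
    have hw := key w
    have hmul : (n - 2) * t v = (n - 2) * t w := by omega
    exact Nat.eq_of_mul_eq_mul_left (by omega) hmul
  have hsum : ∑ v : Fin 1 ⊕ Fin (n - 1), t v = l := by
    have := Finset.card_eq_sum_card_fiberwise
      (f := c) (s := Finset.univ) (t := Finset.univ) (fun i _ => Finset.mem_univ (c i))
    rw [Finset.card_univ, Fintype.card_fin] at this
    exact this.symm
  set s := t (Sum.inl 0) with hs
  have hl : l = n * s := by
    rw [← hsum, Finset.sum_congr rfl (fun v _ => hconst v (Sum.inl 0)),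
      Finset.sum_const, Finset.card_univ, hcard, smul_eq_mul]
  have hkey := key (Sum.inl 0)
  rw [hl, ← hs] at hkey
  have hx : (n - 1) * m = (n - 1) * (2 * s) := by
    have h6 : n + (n - 2) = 2 * (n - 1) := by omega
    calc (n - 1) * m = n * s + (n - 2) * s := hkey
      _ = (n + (n - 2)) * s := by ring
      _ = 2 * (n - 1) * s := by rw [h6]
      _ = (n - 1) * (2 * s) := by ring
  have hm : m = 2 * s := Nat.eq_of_mul_eq_mul_left (by omega) hx
  exact ⟨s, by omega⟩

theorem star_partition_modulus (n : ℕ) (hn : 2 < n) :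
    (∀ m : ℕ, CanPartitionMultiKn (completeBipartiteGraph (Fin 1) (Fin (n - 1))) m →
      Even m) ∧
    CanPartitionMultiKn (completeBipartiteGraph (Fin 1) (Fin (n - 1))) 2 ∧
    (∀ m : ℕ, 0 < m →
      (CanPartitionMultiKn (completeBipartiteGraph (Fin 1) (Fin (n - 1))) m ↔ Even m)) := by
  refine ⟨fun m hm => even_of_partition n hn m hm, canPartition_two n hn, fun m hm0 => ?_⟩
  constructor
  · exact even_of_partition n hn m
  · rintro ⟨k, rfl⟩
    have := canPartition_two_mul (canPartition_two n hn) k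
    rwa [two_mul] at this
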